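/- Let (X, φ) and (Y, ψ) be measure-preserving systems on probability spaces X = (X, Σ, μ) and Y = (Y, Σ', ν), and suppose (Y, ψ) is a factor of (X, φ). If the Koopman operator T_ψ on L²(Y) has a countable Lebesgue component, then so does the Koopman operator T_φ on L²(X). -/

import Mathlib

open MeasureTheory

/-- A linear operator `S : L²(Y) → L²(X)` between the real `L²` spaces of two probability
spaces is a *Markov operator* if it is positive (`f ≥ 0 ⟹ S f ≥ 0`) and maps the constant
function `1` to the constant function `1`. -/
def IsMarkov {Y X : Type*} [MeasurableSpace Y] [MeasurableSpace X]
    (ν : MeasureTheory.Measure Y) (μ : MeasureTheory.Measure X)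
    (S : MeasureTheory.Lp ℝ 2 ν →ₗ[ℝ] MeasureTheory.Lp ℝ 2 μ) : Prop :=
  (∀ g : MeasureTheory.Lp ℝ 2 ν, 0 ≤ g → 0 ≤ S g) ∧
  (∀ g : MeasureTheory.Lp ℝ 2 ν, (g : Y → ℝ) =ᵐ[ν] (fun _ => 1) →
    ((S g : MeasureTheory.Lp ℝ 2 μ) : X → ℝ) =ᵐ[μ] fun _ => 1)

/-- An isometric linear operator `T` on a real Hilbert space has a *countable Lebesgue
component* if there is an orthonormal family `e : ℕ × ℤ → H` with `T (e (n, k)) = e (n, k+1)`.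
(Equivalently: `H₀ := closed span of the e (n, k)` is a closed separable subspace with
`T H₀ = H₀` on which `T` has countable Lebesgue spectrum, the `xₙ := e (n, 0)` forming the
orthonormal sequence whose orbits `(T^k xₙ)_{k ∈ ℤ} = (e (n, k))_{k ∈ ℤ}` are orthonormal
bases of the cyclic subspaces `Z(xₙ; T)` with `H₀ = ⊕ₙ Z(xₙ; T)`.) -/
def HasCountableLebesgueComponent {H : Type*} [NormedAddCommGroup H]
    [InnerProductSpace ℝ H] (T : H → H) : Prop :=
  ∃ e : ℕ × ℤ → H, Orthonormal ℝ e ∧ ∀ (n : ℕ) (k : ℤ), T (e (n, k)) = e (n, k + 1)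

open Polynomial Filter Topology
open scoped RealInnerProductSpace

section Sqrt
variable {K : Type*} [NormedAddCommGroup K] [InnerProductSpace ℝ K]

/-- Cauchy–Schwarz for a positive selfadjoint operator. -/
lemma pos_cs {P : K →L[ℝ] K} (hsa : ∀ x y : K, ⟪P x, y⟫ = ⟪x, P y⟫)
    (hpos : ∀ x : K, 0 ≤ ⟪P x, x⟫) (x y : K) :
    ⟪P x, y⟫ ^ 2 ≤ ⟪P x, x⟫ * ⟪P y, y⟫ := by
  have key : ∀ t : ℝ, 0 ≤ ⟪P y, y⟫ * (t * t) + (2 * ⟪P x, y⟫) * t + ⟪P x, x⟫ := by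
    intro t
    have h0 := hpos (x + t • y)
    have hyx : ⟪P y, x⟫ = ⟪P x, y⟫ := by
      rw [hsa y x, real_inner_comm]
    have expand : ⟪P (x + t • y), x + t • y⟫
        = ⟪P y, y⟫ * (t * t) + (2 * ⟪P x, y⟫) * t + ⟪P x, x⟫ := by
      rw [map_add, P.map_smul]
      simp only [inner_add_add_self, inner_add_left, inner_add_right, real_inner_smul_left,
        real_inner_smul_right]
      rw [hyx]
      ring
    linarith [expand ▸ h0]
  have hd := discrim_le_zero key
  rw [discrim] at hd
  nlinarith [hd]

/-- Norm bound for a positive selfadjoint contraction-type operator. -/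
lemma pos_norm_sq {P : K →L[ℝ] K} (hsa : ∀ x y : K, ⟪P x, y⟫ = ⟪x, P y⟫)
    (hpos : ∀ x : K, 0 ≤ ⟪P x, x⟫) (hbound : ∀ x : K, ⟪P x, x⟫ ≤ ‖x‖ ^ 2) (x : K) :
    ‖P x‖ ^ 2 ≤ ⟪P x, x⟫ := by
  rcases eq_or_ne (‖P x‖) 0 with h | h
  · rw [h]; simpa using hpos x
  · have h1 := pos_cs hsa hpos x (P x)
    have h2 : ⟪P x, P x⟫ = ‖P x‖ ^ 2 := real_inner_self_eq_norm_sq _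
    have h3 : ⟪P (P x), P x⟫ ≤ ‖P x‖ ^ 2 := hbound (P x)
    have hnorm : (0:ℝ) < ‖P x‖ ^ 2 := by positivity
    nlinarith [hpos x]

lemma pos_norm_le {P : K →L[ℝ] K} (hsa : ∀ x y : K, ⟪P x, y⟫ = ⟪x, P y⟫)
    (hpos : ∀ x : K, 0 ≤ ⟪P x, x⟫) (hbound : ∀ x : K, ⟪P x, x⟫ ≤ ‖x‖ ^ 2) (x : K) :
    ‖P x‖ ≤ ‖x‖ := by
  have h := (pos_norm_sq hsa hpos hbound x).trans (hbound x)
  exact (pow_le_pow_iff_left₀ (norm_nonneg _) (norm_nonneg _) two_ne_zero).mp h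

end Sqrt

section Sqrt2
variable {K : Type*} [NormedAddCommGroup K] [InnerProductSpace ℝ K]

variable {D : K →L[ℝ] K}

lemma pow_apply_succ (m : ℕ) (x : K) : (D ^ (m+1)) x = D ((D ^ m) x) := by
  rw [pow_succ']; rfl

lemma pow_apply_succ' (m : ℕ) (x : K) : (D ^ (m+1)) x = (D ^ m) (D x) := by
  rw [pow_succ]; rfl

lemma pow_apply_add (m n : ℕ) (x : K) : (D ^ (m+n)) x = (D ^ m) ((D ^ n) x) := by
  rw [pow_add]; rfl

lemma pow_sa (hsa : ∀ x y : K, ⟪D x, y⟫ = ⟪x, D y⟫) (k : ℕ) :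
    ∀ x y : K, ⟪(D ^ k) x, y⟫ = ⟪x, (D ^ k) y⟫ := by
  induction k with
  | zero => simp
  | succ n ih =>
    intro x y
    rw [pow_apply_succ' n x, pow_apply_succ n y, ih (D x) y, hsa x ((D^n) y)]

lemma pos_pow_inner (hsa : ∀ x y : K, ⟪D x, y⟫ = ⟪x, D y⟫)
    (hpos : ∀ x : K, 0 ≤ ⟪D x, x⟫) (hbound : ∀ x : K, ⟪D x, x⟫ ≤ ‖x‖ ^ 2) (k : ℕ) (x : K) :
    0 ≤ ⟪(D ^ k) x, x⟫ ∧ ⟪(D ^ k) x, x⟫ ≤ ‖x‖ ^ 2 := by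
  have hc : ∀ x : K, ‖D x‖ ≤ ‖x‖ := pos_norm_le hsa hpos hbound
  have hck : ∀ (m : ℕ) (x : K), ‖(D ^ m) x‖ ≤ ‖x‖ := by
    intro m
    induction m with
    | zero => simp
    | succ n ih =>
      intro x
      rw [pow_apply_succ' n x]
      exact (ih (D x)).trans (hc x)
  rcases Nat.even_or_odd k with ⟨m, rfl⟩ | ⟨m, rfl⟩
  · rw [pow_apply_add m m x, pow_sa hsa m]
    constructor
    · exact real_inner_self_nonneg
    · rw [real_inner_self_eq_norm_sq]
      have := hck m x
      nlinarith [norm_nonneg ((D ^ m) x), norm_nonneg x]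
  · have h2 : ⟪(D ^ (2*m+1)) x, x⟫ = ⟪D ((D ^ m) x), (D ^ m) x⟫ := by
      have h1 : (D ^ (2 * m + 1)) x = (D ^ m) (D ((D ^ m) x)) := by
        rw [two_mul, add_right_comm, pow_apply_add (m+1) m x, pow_apply_succ' m _]
      rw [h1, pow_sa hsa m]
    rw [h2]
    constructor
    · exact hpos _
    · exact (hbound _).trans (by nlinarith [hck m x, norm_nonneg ((D^m) x), norm_nonneg x])

end Sqrt2

section Poly

def NNC (p : Polynomial ℝ) : Prop := ∀ i, 0 ≤ p.coeff i

lemma nnc_zero : NNC 0 := fun i => by simp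

lemma nnc_add {p q : Polynomial ℝ} (hp : NNC p) (hq : NNC q) : NNC (p + q) := fun i => by
  rw [Polynomial.coeff_add]; exact add_nonneg (hp i) (hq i)

lemma nnc_mul {p q : Polynomial ℝ} (hp : NNC p) (hq : NNC q) : NNC (p * q) := fun n => by
  rw [Polynomial.coeff_mul]
  exact Finset.sum_nonneg fun x _ => mul_nonneg (hp _) (hq _)

lemma nnc_X : NNC (Polynomial.X : Polynomial ℝ) := fun i => by
  rw [Polynomial.coeff_X]; split_ifs <;> norm_num

lemma nnc_C {a : ℝ} (ha : 0 ≤ a) : NNC (Polynomial.C a) := fun i => by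
  rw [Polynomial.coeff_C]; split_ifs <;> simp [ha]

lemma nnc_eval_one_nonneg {p : Polynomial ℝ} (hp : NNC p) : 0 ≤ p.eval 1 := by
  rw [Polynomial.eval_eq_sum_range]
  exact Finset.sum_nonneg fun i _ => by simpa using hp i

noncomputable def pseq : ℕ → Polynomial ℝ
  | 0 => 0
  | n+1 => Polynomial.C (2⁻¹ : ℝ) * (Polynomial.X + pseq n ^ 2)

lemma pseq_nnc : ∀ n, NNC (pseq n) := by
  intro n
  induction n with
  | zero => exact nnc_zero
  | succ n ih =>
    refine nnc_mul (nnc_C (by norm_num)) (nnc_add nnc_X ?_)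
    rw [sq]; exact nnc_mul ih ih

lemma pseq_succ_sub_nnc : ∀ n, NNC (pseq (n+1) - pseq n) := by
  intro n
  induction n with
  | zero =>
    have h : pseq 1 - pseq 0 = Polynomial.C (2⁻¹ : ℝ) * Polynomial.X := by
      simp [pseq]
    rw [h]; exact nnc_mul (nnc_C (by norm_num)) nnc_X
  | succ n ih =>
    have h : pseq (n+2) - pseq (n+1)
        = Polynomial.C (2⁻¹ : ℝ) * ((pseq (n+1) + pseq n) * (pseq (n+1) - pseq n)) := by
      show Polynomial.C (2⁻¹ : ℝ) * (Polynomial.X + pseq (n+1) ^ 2)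
          - Polynomial.C (2⁻¹ : ℝ) * (Polynomial.X + pseq n ^ 2) = _
      ring
    rw [h]
    exact nnc_mul (nnc_C (by norm_num)) (nnc_mul (nnc_add (pseq_nnc _) (pseq_nnc _)) ih)

lemma pseq_sub_nnc : ∀ {n m : ℕ}, n ≤ m → NNC (pseq m - pseq n) := by
  intro n m h
  induction m, h using Nat.le_induction with
  | base => simpa using nnc_zero
  | succ m hm ih =>
    have : pseq (m+1) - pseq n = (pseq (m+1) - pseq m) + (pseq m - pseq n) := by ring
    rw [this]; exact nnc_add (pseq_succ_sub_nnc m) ih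

lemma pseq_eval_one (n : ℕ) : 0 ≤ (pseq n).eval 1 ∧ (pseq n).eval 1 ≤ 1 := by
  induction n with
  | zero => simp [pseq]
  | succ n ih =>
    have h : (pseq (n+1)).eval 1 = 2⁻¹ * (1 + ((pseq n).eval 1) ^ 2) := by
      simp [pseq]
    constructor <;> rw [h] <;> nlinarith [ih.1, ih.2]

end Poly

section OpPoly
variable {K : Type*} [NormedAddCommGroup K] [InnerProductSpace ℝ K]
variable {D : K →L[ℝ] K}

lemma aeval_apply' (p : Polynomial ℝ) (x : K) :
    (Polynomial.aeval D p) x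
      = ∑ i ∈ Finset.range (p.natDegree + 1), p.coeff i • ((D ^ i) x) := by
  rw [Polynomial.aeval_eq_sum_range]
  simp [ContinuousLinearMap.sum_apply, ContinuousLinearMap.smul_apply]

lemma aeval_sa (hsa : ∀ x y : K, ⟪D x, y⟫ = ⟪x, D y⟫) (p : Polynomial ℝ) (x y : K) :
    ⟪(Polynomial.aeval D p) x, y⟫ = ⟪x, (Polynomial.aeval D p) y⟫ := by
  rw [aeval_apply', aeval_apply', sum_inner, inner_sum]
  refine Finset.sum_congr rfl fun i _ => ?_
  rw [real_inner_smul_left, real_inner_smul_right, pow_sa hsa i]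

lemma aeval_inner_nonneg (hsa : ∀ x y : K, ⟪D x, y⟫ = ⟪x, D y⟫)
    (hpos : ∀ x : K, 0 ≤ ⟪D x, x⟫) (hbound : ∀ x : K, ⟪D x, x⟫ ≤ ‖x‖ ^ 2)
    {p : Polynomial ℝ} (hp : NNC p) (x : K) :
    0 ≤ ⟪(Polynomial.aeval D p) x, x⟫ := by
  rw [aeval_apply', sum_inner]
  refine Finset.sum_nonneg fun i _ => ?_
  rw [real_inner_smul_left]
  exact mul_nonneg (hp i) (pos_pow_inner hsa hpos hbound i x).1

lemma aeval_inner_le (hsa : ∀ x y : K, ⟪D x, y⟫ = ⟪x, D y⟫)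
    (hpos : ∀ x : K, 0 ≤ ⟪D x, x⟫) (hbound : ∀ x : K, ⟪D x, x⟫ ≤ ‖x‖ ^ 2)
    {p : Polynomial ℝ} (hp : NNC p) (x : K) :
    ⟪(Polynomial.aeval D p) x, x⟫ ≤ p.eval 1 * ‖x‖ ^ 2 := by
  rw [aeval_apply', sum_inner, Polynomial.eval_eq_sum_range, Finset.sum_mul]
  refine Finset.sum_le_sum fun i _ => ?_
  rw [real_inner_smul_left, one_pow, mul_one]
  exact mul_le_mul_of_nonneg_left (pos_pow_inner hsa hpos hbound i x).2 (hp i)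

lemma aeval_comm {W : K →L[ℝ] K} (hW : ∀ x, W (D x) = D (W x)) (p : Polynomial ℝ) (x : K) :
    W ((Polynomial.aeval D p) x) = (Polynomial.aeval D p) (W x) := by
  have hpow : ∀ (i : ℕ) (x : K), W ((D ^ i) x) = (D ^ i) (W x) := by
    intro i
    induction i with
    | zero => intro x; simp
    | succ n ih =>
      intro x
      rw [pow_apply_succ, pow_apply_succ, hW ((D ^ n) x), ih x]
  rw [aeval_apply', aeval_apply', map_sum]
  refine Finset.sum_congr rfl fun i _ => ?_
  rw [W.map_smul, hpow i x]

end OpPoly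

section SqrtMain
variable {K : Type*} [NormedAddCommGroup K] [InnerProductSpace ℝ K] [CompleteSpace K]

theorem exists_selfadjoint_sqrt (B : K →L[ℝ] K)
    (hsaB : ∀ x y : K, ⟪B x, y⟫ = ⟪x, B y⟫) (hposB : ∀ x : K, 0 ≤ ⟪B x, x⟫) :
    ∃ R : K →L[ℝ] K, (∀ x y : K, ⟪R x, y⟫ = ⟪x, R y⟫) ∧ (∀ x, R (R x) = B x) ∧
      ∀ W : K →L[ℝ] K, (∀ x, W (B x) = B (W x)) → (∀ x, W (R x) = R (W x)) := by
  set s : ℝ := ‖B‖ + 1 with hs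
  have hs0 : 0 < s := by positivity
  set D : K →L[ℝ] K := 1 - s⁻¹ • B with hD
  have hDapp : ∀ x, D x = x - s⁻¹ • B x := fun x => by
    simp [hD, ContinuousLinearMap.sub_apply, ContinuousLinearMap.smul_apply]
  have hsaD : ∀ x y : K, ⟪D x, y⟫ = ⟪x, D y⟫ := by
    intro x y
    rw [hDapp, hDapp, inner_sub_left, inner_sub_right, real_inner_smul_left,
      real_inner_smul_right, hsaB]
  have hBx_le : ∀ x : K, ⟪B x, x⟫ ≤ s * ‖x‖ ^ 2 := by
    intro x
    have h1 : ⟪B x, x⟫ ≤ ‖B x‖ * ‖x‖ := real_inner_le_norm _ _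
    have h2 : ‖B x‖ ≤ ‖B‖ * ‖x‖ := B.le_opNorm x
    nlinarith [norm_nonneg x, norm_nonneg (B x), norm_nonneg B]
  have hposD : ∀ x : K, 0 ≤ ⟪D x, x⟫ := by
    intro x
    rw [hDapp, inner_sub_left, real_inner_smul_left, real_inner_self_eq_norm_sq]
    have := hBx_le x
    have h2 : s⁻¹ * ⟪B x, x⟫ ≤ ‖x‖ ^ 2 := by
      rw [inv_mul_le_iff₀ hs0]
      have := hBx_le x
      nlinarith [sq_nonneg ‖x‖]
    linarith
  have hbddD : ∀ x : K, ⟪D x, x⟫ ≤ ‖x‖ ^ 2 := by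
    intro x
    rw [hDapp, inner_sub_left, real_inner_smul_left, real_inner_self_eq_norm_sq]
    have h1 := hposB x
    have : 0 ≤ s⁻¹ * ⟪B x, x⟫ := mul_nonneg (by positivity) h1
    linarith
  -- the approximating operators
  set Cop : ℕ → (K →L[ℝ] K) := fun n => Polynomial.aeval D (pseq n) with hCop
  have hCsa : ∀ n (x y : K), ⟪Cop n x, y⟫ = ⟪x, Cop n y⟫ := fun n => aeval_sa hsaD _
  have hCbounds : ∀ n (x : K), 0 ≤ ⟪Cop n x, x⟫ ∧ ⟪Cop n x, x⟫ ≤ ‖x‖ ^ 2 := by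
    intro n x
    refine ⟨aeval_inner_nonneg hsaD hposD hbddD (pseq_nnc n) x, ?_⟩
    have h := aeval_inner_le hsaD hposD hbddD (pseq_nnc n) x
    have h2 := (pseq_eval_one n).2
    nlinarith [sq_nonneg ‖x‖]
  have hCnorm : ∀ n (x : K), ‖Cop n x‖ ≤ ‖x‖ := fun n =>
    pos_norm_le (hCsa n) (fun x => (hCbounds n x).1) (fun x => (hCbounds n x).2)
  -- difference estimates
  have hdiff : ∀ {n m : ℕ}, n ≤ m → ∀ x : K,
      ‖Cop m x - Cop n x‖ ^ 2 ≤ ⟪Cop m x, x⟫ - ⟪Cop n x, x⟫ := by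
    intro n m hnm x
    set P : K →L[ℝ] K := Polynomial.aeval D (pseq m - pseq n) with hP
    have hPx : P x = Cop m x - Cop n x := by
      rw [hP, map_sub]; rfl
    have hPsa : ∀ x y : K, ⟪P x, y⟫ = ⟪x, P y⟫ := aeval_sa hsaD _
    have hPpos : ∀ x : K, 0 ≤ ⟪P x, x⟫ :=
      fun x => aeval_inner_nonneg hsaD hposD hbddD (pseq_sub_nnc hnm) x
    have hPbdd : ∀ x : K, ⟪P x, x⟫ ≤ ‖x‖ ^ 2 := by
      intro x
      have h := aeval_inner_le hsaD hposD hbddD (pseq_sub_nnc hnm) x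
      have he : (pseq m - pseq n).eval 1 ≤ 1 := by
        rw [Polynomial.eval_sub]
        have := (pseq_eval_one m).2
        have := (pseq_eval_one n).1
        linarith
      nlinarith [sq_nonneg ‖x‖, nnc_eval_one_nonneg (pseq_sub_nnc hnm)]
    have h := pos_norm_sq hPsa hPpos hPbdd x
    rw [hPx, inner_sub_left] at h
    exact h
  -- convergence
  have hmono : ∀ x : K, Monotone fun n => ⟪Cop n x, x⟫ := by
    intro x n m hnm
    have h := aeval_inner_nonneg hsaD hposD hbddD (pseq_sub_nnc hnm) x
    have : ⟪(Polynomial.aeval D (pseq m - pseq n)) x, x⟫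
        = ⟪Cop m x, x⟫ - ⟪Cop n x, x⟫ := by
      rw [map_sub]
      rw [ContinuousLinearMap.sub_apply, inner_sub_left]
    linarith [this ▸ h]
  have hbddabove : ∀ x : K, BddAbove (Set.range fun n => ⟪Cop n x, x⟫) := by
    intro x
    refine ⟨‖x‖ ^ 2, ?_⟩
    rintro y ⟨n, rfl⟩
    exact (hCbounds n x).2
  have hacauchy : ∀ x : K, CauchySeq fun n => ⟪Cop n x, x⟫ := fun x =>
    (tendsto_atTop_ciSup (hmono x) (hbddabove x)).cauchySeq
  have hCcauchy : ∀ x : K, CauchySeq fun n => Cop n x := by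
    intro x
    rw [Metric.cauchySeq_iff']
    intro ε hε
    obtain ⟨N, hN⟩ := Metric.cauchySeq_iff'.mp (hacauchy x) (ε ^ 2) (by positivity)
    refine ⟨N, fun n hn => ?_⟩
    have h1 := hdiff hn x
    have h2 := hN n hn
    rw [Real.dist_eq] at h2
    rw [dist_eq_norm]
    have h3 : ‖Cop n x - Cop N x‖ ^ 2 < ε ^ 2 := by
      have : ⟪Cop n x, x⟫ - ⟪Cop N x, x⟫ ≤ |⟪Cop n x, x⟫ - ⟪Cop N x, x⟫| := le_abs_self _
      linarith
    nlinarith [norm_nonneg (Cop n x - Cop N x)]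
  have hlim : ∀ x : K, ∃ y : K, Filter.Tendsto (fun n => Cop n x) Filter.atTop (nhds y) :=
    fun x => cauchySeq_tendsto_of_complete (hCcauchy x)
  choose c hc using hlim
  have hcadd : ∀ x y : K, c (x + y) = c x + c y := by
    intro x y
    refine tendsto_nhds_unique ?_ ((hc x).add (hc y))
    have h : (fun n => Cop n (x + y)) = fun n => Cop n x + Cop n y := by
      funext n; rw [map_add]
    rw [← h]; exact hc (x + y)
  have hcsmul : ∀ (a : ℝ) (x : K), c (a • x) = a • c x := by
    intro a x
    refine tendsto_nhds_unique ?_ ((hc x).const_smul a)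
    have h : (fun n => Cop n (a • x)) = fun n => a • Cop n x := by
      funext n; rw [(Cop n).map_smul]
    rw [← h]; exact hc (a • x)
  have hcsub : ∀ x y : K, c (x - y) = c x - c y := by
    intro x y
    have h1 : x - y = x + (-1 : ℝ) • y := by rw [neg_one_smul, ← sub_eq_add_neg]
    rw [h1, hcadd, hcsmul, neg_one_smul, ← sub_eq_add_neg]
  have hcnorm : ∀ x : K, ‖c x‖ ≤ ‖x‖ := by
    intro x
    exact le_of_tendsto ((hc x).norm) (Filter.Eventually.of_forall fun n => hCnorm n x)
  have hcsa : ∀ x y : K, ⟪c x, y⟫ = ⟪x, c y⟫ := by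
    intro x y
    have h1 : Filter.Tendsto (fun n => ⟪Cop n x, y⟫) Filter.atTop (nhds ⟪c x, y⟫) :=
      (hc x).inner tendsto_const_nhds
    have h2 : Filter.Tendsto (fun n => ⟪x, Cop n y⟫) Filter.atTop (nhds ⟪x, c y⟫) :=
      tendsto_const_nhds.inner (hc y)
    refine tendsto_nhds_unique h1 ?_
    have h : (fun n => ⟪Cop n x, y⟫) = fun n => ⟪x, Cop n y⟫ := by
      funext n; exact hCsa n x y
    rw [h]; exact h2
  have hccomm : ∀ W : K →L[ℝ] K, (∀ x, W (B x) = B (W x)) → ∀ x, W (c x) = c (W x) := by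
    intro W hWB x
    have hWD : ∀ x, W (D x) = D (W x) := by
      intro x
      rw [hDapp, hDapp, map_sub, W.map_smul, hWB]
    refine tendsto_nhds_unique ((W.continuous.tendsto _).comp (hc x)) ?_
    have h : (⇑W ∘ fun n => Cop n x) = fun n => Cop n (W x) := by
      funext n; exact aeval_comm hWD (pseq n) x
    rw [h]; exact hc (W x)
  have hccx : ∀ x : K, Filter.Tendsto (fun n => Cop n (Cop n x)) Filter.atTop (nhds (c (c x))) := by
    intro x
    rw [tendsto_iff_norm_sub_tendsto_zero]
    have hbound : ∀ n, ‖Cop n (Cop n x) - c (c x)‖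
        ≤ ‖Cop n x - c x‖ + ‖Cop n (c x) - c (c x)‖ := by
      intro n
      have h1 : Cop n (Cop n x) - c (c x)
          = Cop n (Cop n x - c x) + (Cop n (c x) - c (c x)) := by
        rw [map_sub]; abel
      rw [h1]
      refine (norm_add_le _ _).trans ?_
      exact add_le_add (hCnorm n _) le_rfl
    have h2 : Filter.Tendsto (fun n => ‖Cop n x - c x‖ + ‖Cop n (c x) - c (c x)‖)
        Filter.atTop (nhds 0) := by
      have ha := (tendsto_iff_norm_sub_tendsto_zero.mp (hc x))
      have hb := (tendsto_iff_norm_sub_tendsto_zero.mp (hc (c x)))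
      simpa using ha.add hb
    exact squeeze_zero (fun n => norm_nonneg _) hbound h2
  have hfix : ∀ x : K, c x = (2:ℝ)⁻¹ • (D x + c (c x)) := by
    intro x
    have hrec : ∀ n, Cop (n+1) x = (2:ℝ)⁻¹ • (D x + Cop n (Cop n x)) := by
      intro n
      have h0 : Cop (n+1) x = (Polynomial.aeval D (Polynomial.C (2⁻¹:ℝ)
          * (Polynomial.X + pseq n ^ 2))) x := rfl
      rw [h0, map_mul, Polynomial.aeval_C, ContinuousLinearMap.mul_apply]
      have h1 : (Polynomial.aeval D (Polynomial.X + pseq n ^ 2)) x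
          = D x + Cop n (Cop n x) := by
        rw [map_add, Polynomial.aeval_X, map_pow, ContinuousLinearMap.add_apply, sq,
          ContinuousLinearMap.mul_apply]
      rw [h1]
      simp [Algebra.algebraMap_eq_smul_one]
    refine tendsto_nhds_unique ((hc x).comp (Filter.tendsto_add_atTop_nat 1)) ?_
    have heq : ((fun n => Cop n x) ∘ fun n => n + 1)
        = fun n => (2:ℝ)⁻¹ • (D x + Cop n (Cop n x)) := by
      funext n; exact hrec n
    rw [heq]
    exact ((tendsto_const_nhds.add (hccx x)).const_smul _)
  have h2cx : ∀ x : K, (2:ℝ) • c x = D x + c (c x) := by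
    intro x
    have h := hfix x
    calc (2:ℝ) • c x = (2:ℝ) • ((2:ℝ)⁻¹ • (D x + c (c x))) := by rw [← h]
      _ = D x + c (c x) := by rw [smul_smul]; norm_num
  -- build C as CLM
  set Clin : K →ₗ[ℝ] K :=
    { toFun := c, map_add' := hcadd, map_smul' := hcsmul } with hClin
  set C : K →L[ℝ] K := Clin.mkContinuous 1 (fun x => by rw [one_mul]; exact hcnorm x) with hC
  have hCapp : ∀ x, C x = c x := fun _ => rfl
  set rs : ℝ := Real.sqrt s with hrs
  have hrs2 : rs * rs = s := Real.mul_self_sqrt hs0.le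
  have happ : ∀ z, (rs • (1 - C) : K →L[ℝ] K) z = rs • (z - c z) := by
    intro z
    simp only [ContinuousLinearMap.smul_apply, ContinuousLinearMap.sub_apply,
      ContinuousLinearMap.one_apply, hCapp]
  refine ⟨rs • (1 - C), ?_, ?_, ?_⟩
  · intro x y
    rw [happ, happ, real_inner_smul_left, real_inner_smul_right,
      inner_sub_left, inner_sub_right, hcsa]
  · intro x
    rw [happ, happ, hcsmul, hcsub, ← smul_sub rs, smul_smul, hrs2]
    have key : (x - c x) - (c x - c (c x)) = x - D x := by
      have h := h2cx x
      have h2 : (x - c x) - (c x - c (c x)) = x - ((2:ℝ) • c x) + c (c x) := by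
        rw [two_smul]; abel
      rw [h2, h]
      abel
    rw [key, hDapp]
    have h3 : x - (x - s⁻¹ • B x) = s⁻¹ • B x := by abel
    rw [h3, smul_smul, mul_inv_cancel₀ (ne_of_gt hs0), one_smul]
  · intro W hWB x
    rw [happ, happ, W.map_smul, map_sub, hccomm W hWB x]

end SqrtMain

section Abstract
variable {K H : Type*} [NormedAddCommGroup K] [InnerProductSpace ℝ K] [CompleteSpace K]
  [NormedAddCommGroup H] [InnerProductSpace ℝ H] [CompleteSpace H]

theorem abstract_transfer (T : H →L[ℝ] H) (hT : ∀ a b : H, ⟪T a, T b⟫ = ⟪a, b⟫)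
    (V : K →L[ℝ] K) (hV : ∀ a b : K, ⟪V a, V b⟫ = ⟪a, b⟫) (hVsurj : Function.Surjective V)
    (A : K →L[ℝ] H) (hAinj : Function.Injective A)
    (hAV : ∀ x, A (V x) = T (A x))
    (e : ℕ × ℤ → K) (he : Orthonormal ℝ e)
    (hse : ∀ (n : ℕ) (k : ℤ), V (e (n, k)) = e (n, k+1)) :
    ∃ e' : ℕ × ℤ → H, Orthonormal ℝ e' ∧ ∀ (n : ℕ) (k : ℤ), T (e' (n, k)) = e' (n, k + 1) := by
  classical
  set B : K →L[ℝ] K := (ContinuousLinearMap.adjoint A) ∘L A with hB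
  have hBinner : ∀ x y : K, ⟪B x, y⟫ = ⟪A x, A y⟫ := by
    intro x y
    rw [hB, ContinuousLinearMap.comp_apply, ContinuousLinearMap.adjoint_inner_left]
  have hsaB : ∀ x y : K, ⟪B x, y⟫ = ⟪x, B y⟫ := by
    intro x y
    calc ⟪B x, y⟫ = ⟪A x, A y⟫ := hBinner x y
      _ = ⟪A y, A x⟫ := real_inner_comm _ _
      _ = ⟪B y, x⟫ := (hBinner y x).symm
      _ = ⟪x, B y⟫ := real_inner_comm _ _
  have hposB : ∀ x : K, 0 ≤ ⟪B x, x⟫ := by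
    intro x; rw [hBinner]; exact real_inner_self_nonneg
  have hVB : ∀ x : K, V (B x) = B (V x) := by
    intro x
    refine ext_inner_right ℝ fun y => ?_
    obtain ⟨b, rfl⟩ := hVsurj y
    rw [hV (B x) b, hBinner, hBinner, hAV, hAV, hT]
  obtain ⟨R, hRsa, hRR, hRcomm⟩ := exists_selfadjoint_sqrt B hsaB hposB
  have hVR : ∀ x, V (R x) = R (V x) := hRcomm V hVB
  have hRinner : ∀ x y : K, ⟪R x, R y⟫ = ⟪A x, A y⟫ := by
    intro x y
    rw [hRsa, hRR, ← hBinner, hsaB]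
  have hRnormdiff : ∀ u v : K, ‖A u - A v‖ = ‖R u - R v‖ := by
    intro u v
    rw [← map_sub, ← map_sub]
    have h1 : ‖A (u - v)‖ ^ 2 = ‖R (u - v)‖ ^ 2 := by
      rw [← real_inner_self_eq_norm_sq, ← real_inner_self_eq_norm_sq, hRinner]
    have := congrArg Real.sqrt h1
    rwa [Real.sqrt_sq (norm_nonneg _), Real.sqrt_sq (norm_nonneg _)] at this
  have hRinj : Function.Injective R := by
    intro u v huv
    have h : A u = A v := by
      have h0 : ‖A u - A v‖ = 0 := by
        rw [hRnormdiff, huv, sub_self, norm_zero]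
      rwa [norm_eq_zero, sub_eq_zero] at h0
    exact hAinj h
  have hRdense : DenseRange ⇑R := by
    have horth : (LinearMap.range (R : K →ₗ[ℝ] K))ᗮ = ⊥ := by
      rw [Submodule.eq_bot_iff]
      intro v hv
      have h1 : ∀ x : K, ⟪R x, v⟫ = 0 := by
        intro x
        exact hv (R x) ⟨x, rfl⟩
      have h2 : R v = 0 := by
        refine ext_inner_right ℝ fun y => ?_
        calc ⟪R v, y⟫ = ⟪v, R y⟫ := hRsa v y
          _ = ⟪R y, v⟫ := real_inner_comm _ _
          _ = 0 := h1 y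
          _ = ⟪(0:K), y⟫ := (inner_zero_left y).symm
      have h3 : R v = R 0 := by rw [h2, map_zero]
      exact hRinj h3
    have htop := Submodule.topologicalClosure_eq_top_iff.mpr horth
    have hset : ((LinearMap.range (R : K →ₗ[ℝ] K)) : Set K) = Set.range ⇑R := by
      ext v
      simp [LinearMap.mem_range]
    rw [DenseRange, ← hset]
    exact Submodule.dense_iff_topologicalClosure_eq_top.mpr htop
  -- choose approximating sequences
  have hseq : ∀ z : K, ∃ u : ℕ → K, Filter.Tendsto (fun m => R (u m)) Filter.atTop (nhds z) := by
    intro z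
    have h := fun m : ℕ => hRdense.exists_dist_lt z
      (show (0:ℝ) < 1/(m+1) by positivity)
    choose u hu using h
    refine ⟨u, ?_⟩
    rw [tendsto_iff_dist_tendsto_zero]
    refine squeeze_zero (fun m => dist_nonneg) (fun m => ?_) tendsto_one_div_add_atTop_nhds_zero_nat
    rw [dist_comm]
    exact (hu m).le
  choose useq huseq using hseq
  have hACauchy : ∀ z, CauchySeq fun m => A (useq z m) := by
    intro z
    have h1 : CauchySeq fun m => R (useq z m) := (huseq z).cauchySeq
    rw [Metric.cauchySeq_iff] at h1 ⊢
    intro ε hε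
    obtain ⟨N, hN⟩ := h1 ε hε
    refine ⟨N, fun m hm n hn => ?_⟩
    rw [dist_eq_norm, hRnormdiff, ← dist_eq_norm]
    exact hN m hm n hn
  have hwex : ∀ z, ∃ wz, Filter.Tendsto (fun m => A (useq z m)) Filter.atTop (nhds wz) :=
    fun z => cauchySeq_tendsto_of_complete (hACauchy z)
  choose w hw using hwex
  have hwgen : ∀ (z : K) (u : ℕ → K),
      Filter.Tendsto (fun m => R (u m)) Filter.atTop (nhds z) →
      Filter.Tendsto (fun m => A (u m)) Filter.atTop (nhds (w z)) := by
    intro z u hu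
    have hdiff0 : Filter.Tendsto (fun m => A (u m) - A (useq z m)) Filter.atTop (nhds 0) := by
      rw [tendsto_zero_iff_norm_tendsto_zero]
      have heq : (fun m => ‖A (u m) - A (useq z m)‖) = fun m => ‖R (u m) - R (useq z m)‖ :=
        funext fun m => hRnormdiff _ _
      rw [heq]
      have := (hu.sub (huseq z)).norm
      simpa using this
    have := hdiff0.add (hw z)
    simpa using this
  have hwinner : ∀ z z' : K, ⟪w z, w z'⟫ = ⟪z, z'⟫ := by
    intro z z'
    have h1 : Filter.Tendsto (fun m => ⟪A (useq z m), A (useq z' m)⟫)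
        Filter.atTop (nhds ⟪w z, w z'⟫) := (hw z).inner (hw z')
    have h2 : (fun m => ⟪A (useq z m), A (useq z' m)⟫)
        = fun m => ⟪R (useq z m), R (useq z' m)⟫ := funext fun m => (hRinner _ _).symm
    rw [h2] at h1
    exact tendsto_nhds_unique h1 ((huseq z).inner (huseq z'))
  have hwshift : ∀ z : K, T (w z) = w (V z) := by
    intro z
    have h1 : Filter.Tendsto (fun m => A (V (useq z m))) Filter.atTop (nhds (T (w z))) := by
      have h := (T.continuous.tendsto _).comp (hw z)
      refine h.congr fun m => ?_
      exact (hAV (useq z m)).symm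
    have h2 : Filter.Tendsto (fun m => R (V (useq z m))) Filter.atTop (nhds (V z)) := by
      have heq : (fun m => R (V (useq z m))) = fun m => V (R (useq z m)) :=
        funext fun m => (hVR (useq z m)).symm
      rw [heq]
      exact (V.continuous.tendsto _).comp (huseq z)
    exact tendsto_nhds_unique h1 (hwgen (V z) _ h2)
  refine ⟨fun nk => w (e nk), ?_, ?_⟩
  · rw [orthonormal_iff_ite] at he ⊢
    intro i j
    rw [hwinner]
    exact he i j
  · intro n k
    rw [hwshift, hse]

end Abstract

section MarkovCont
variable {α : Type*} [MeasurableSpace α] {m : Measure α}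
variable {β : Type*} [MeasurableSpace β] {mb : Measure β}

lemma Lp_smul_nonneg (c : ℝ) (hc : 0 ≤ c) (f : Lp ℝ 2 m) (hf : 0 ≤ f) :
    0 ≤ c • f := by
  rw [← MeasureTheory.Lp.coeFn_nonneg] at hf ⊢
  filter_upwards [hf, MeasureTheory.Lp.coeFn_smul c f] with x hx hsx
  rw [hsx]
  exact mul_nonneg hc hx

lemma positive_linear_bounded (S : Lp ℝ 2 m →ₗ[ℝ] Lp ℝ 2 mb)
    (hpos : ∀ g : Lp ℝ 2 m, 0 ≤ g → 0 ≤ S g) :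
    ∃ C : ℝ, ∀ g, ‖S g‖ ≤ C * ‖g‖ := by
  by_contra hcon
  push_neg at hcon
  have habs : ∀ g : Lp ℝ 2 m, ‖S g‖ ≤ ‖S (|g|)‖ := by
    intro g
    have h1 : S g ≤ S (|g|) := by
      have h0 : (0 : Lp ℝ 2 m) ≤ |g| - g := sub_nonneg.mpr (le_abs_self g)
      have hS := hpos _ h0
      rw [map_sub] at hS
      exact sub_nonneg.mp hS
    have h2 : -(S (|g|)) ≤ S g := by
      have h0 : (0 : Lp ℝ 2 m) ≤ |g| + g := by
        have h := add_le_add_left (neg_le.mp (neg_le_abs g)) (|g|)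
        rwa [neg_add_cancel, add_comm] at h
      have hS := hpos _ h0
      rw [map_add] at hS
      have h4 : (0 : Lp ℝ 2 mb) ≤ S g - -(S (|g|)) := by
        rw [sub_neg_eq_add, add_comm]
        exact hS
      exact sub_nonneg.mp h4
    have hpos2 : 0 ≤ S (|g|) := hpos _ (abs_nonneg g)
    have habs2 : |S g| ≤ |S (|g|)| := by
      rw [abs_of_nonneg hpos2]
      show (S g) ⊔ (-(S g)) ≤ S (|g|)
      exact sup_le h1 (neg_le.mp h2)
    exact norm_le_norm_of_abs_le_abs habs2
  have hpick : ∀ n : ℕ, ∃ h : Lp ℝ 2 m,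
      0 ≤ h ∧ ‖h‖ ≤ (2:ℝ)⁻¹ ^ n ∧ (n:ℝ) < ‖S h‖ := by
    intro n
    obtain ⟨g, hg⟩ := hcon ((n:ℝ) * 2 ^ n)
    have hgne : g ≠ 0 := by
      rintro rfl
      rw [norm_zero, mul_zero, map_zero, norm_zero] at hg
      exact lt_irrefl 0 hg
    have hgnorm : 0 < ‖g‖ := norm_pos_iff.mpr hgne
    refine ⟨((2:ℝ)⁻¹ ^ n * ‖g‖⁻¹) • |g|, ?_, ?_, ?_⟩
    · exact Lp_smul_nonneg _ (by positivity) _ (abs_nonneg g)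
    · rw [norm_smul, norm_abs_eq_norm, Real.norm_of_nonneg (by positivity)]
      rw [mul_assoc, inv_mul_cancel₀ (ne_of_gt hgnorm), mul_one]
    · rw [S.map_smul, norm_smul, Real.norm_of_nonneg (by positivity)]
      have h1 : ‖S g‖ ≤ ‖S (|g|)‖ := habs g
      have h2 : (n:ℝ) * 2 ^ n * ‖g‖ < ‖S (|g|)‖ := lt_of_lt_of_le hg h1
      have h3 : (0:ℝ) < (2:ℝ)⁻¹ ^ n * ‖g‖⁻¹ := by positivity
      calc (n:ℝ) = ((2:ℝ)⁻¹ ^ n * ‖g‖⁻¹) * ((n:ℝ) * 2 ^ n * ‖g‖) := by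
            rw [show ((2:ℝ)⁻¹ ^ n * ‖g‖⁻¹) * ((n:ℝ) * 2 ^ n * ‖g‖)
                = (n:ℝ) * ((2:ℝ)⁻¹ ^ n * 2 ^ n) * (‖g‖⁻¹ * ‖g‖) by ring,
              ← mul_pow, inv_mul_cancel₀ (two_ne_zero), inv_mul_cancel₀ hgnorm.ne']
            simp
        _ < ((2:ℝ)⁻¹ ^ n * ‖g‖⁻¹) * ‖S (|g|)‖ := mul_lt_mul_of_pos_left h2 h3
  choose h hh0 hhn hhS using hpick
  have hsum : Summable h := by
    refine Summable.of_norm (Summable.of_nonneg_of_le (fun n => norm_nonneg _) hhn ?_)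
    exact summable_geometric_of_lt_one (by norm_num) (by norm_num)
  set G := ∑' n, h n with hG
  have hle : ∀ n, h n ≤ G := by
    intro n
    have := hsum.sum_le_tsum {n} (fun i _ => hh0 i)
    simpa using this
  have hSG : ∀ n, ‖S (h n)‖ ≤ ‖S G‖ := by
    intro n
    have h1 : S (h n) ≤ S G := by
      have := hpos _ (sub_nonneg.mpr (hle n))
      rw [map_sub] at this
      exact sub_nonneg.mp this
    have h2 : 0 ≤ S (h n) := hpos _ (hh0 n)
    have h3 : |S (h n)| ≤ |S G| := by
      rw [abs_of_nonneg h2, abs_of_nonneg (h2.trans h1)]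
      exact h1
    exact norm_le_norm_of_abs_le_abs h3
  obtain ⟨n, hn⟩ := exists_nat_gt ‖S G‖
  have := (hhS n).trans_le (hSG n)
  have hlt : (n:ℝ) < (n:ℝ) := this.trans hn
  exact lt_irrefl _ hlt

end MarkovCont

section Koopman
variable {Z : Type*} [MeasurableSpace Z] {μz : Measure Z} [IsProbabilityMeasure μz]

lemma koopman_inner (φ : Z → Z) (hφ : MeasurePreserving φ μz μz)
    (T : Lp ℝ 2 μz →L[ℝ] Lp ℝ 2 μz)
    (hT : ∀ f : Lp ℝ 2 μz, (T f : Z → ℝ) =ᵐ[μz] (f : Z → ℝ) ∘ φ)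
    (f g : Lp ℝ 2 μz) : ⟪T f, T g⟫ = ⟪f, g⟫ := by
  rw [MeasureTheory.L2.inner_def, MeasureTheory.L2.inner_def]
  have h1 : ∫ a, ⟪(T f : Z → ℝ) a, (T g : Z → ℝ) a⟫ ∂μz
      = ∫ a, (f : Z → ℝ) (φ a) * (g : Z → ℝ) (φ a) ∂μz := by
    refine integral_congr_ae ?_
    filter_upwards [hT f, hT g] with a ha hb
    rw [RCLike.inner_apply, ha, hb]
    simp [Function.comp]
    ring
  have hmeas : AEStronglyMeasurable (fun y => (f : Z → ℝ) y * (g : Z → ℝ) y)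
      (Measure.map φ μz) := by
    rw [hφ.map_eq]
    exact (MeasureTheory.Lp.aestronglyMeasurable f).mul (MeasureTheory.Lp.aestronglyMeasurable g)
  have h2 : ∫ a, (f : Z → ℝ) (φ a) * (g : Z → ℝ) (φ a) ∂μz
      = ∫ y, (f : Z → ℝ) y * (g : Z → ℝ) y ∂μz := by
    have h3 := MeasureTheory.integral_map (hφ.measurable.aemeasurable) hmeas
    rw [hφ.map_eq] at h3
    exact h3.symm
  rw [h1, h2]
  refine integral_congr_ae ?_
  filter_upwards with a
  rw [RCLike.inner_apply]
  simp
  ring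

end Koopman

/-- Let `(X, φ)` and `(Y, ψ)` be measure-preserving systems on probability
spaces, with Koopman operators `T_φ`, `T_ψ` on the respective (real) `L²` spaces, and suppose
`(Y, ψ)` is a factor of `(X, φ)`, i.e. there is an injective Markov operator
`S : L²(Y) → L²(X)` with `T_φ S = S T_ψ`. If `T_ψ` has a countable Lebesgue component, then
so does `T_φ`. -/
theorem stmt13 {X Y : Type*} [MeasurableSpace X] [MeasurableSpace Y]
    (μ : Measure X) (ν : Measure Y) [IsProbabilityMeasure μ] [IsProbabilityMeasure ν]
    (φ : X → X) (ψ : Y → Y)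
    (hφ : MeasurePreserving φ μ μ) (hψ : MeasurePreserving ψ ν ν)
    (Tφ : Lp ℝ 2 μ →L[ℝ] Lp ℝ 2 μ)
    (hTφ : ∀ f : Lp ℝ 2 μ, (Tφ f : X → ℝ) =ᵐ[μ] (f : X → ℝ) ∘ φ)
    (Tψ : Lp ℝ 2 ν →L[ℝ] Lp ℝ 2 ν)
    (hTψ : ∀ g : Lp ℝ 2 ν, (Tψ g : Y → ℝ) =ᵐ[ν] (g : Y → ℝ) ∘ ψ)
    (S : Lp ℝ 2 ν →ₗ[ℝ] Lp ℝ 2 μ) (hinj : Function.Injective S)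
    (hMarkov : IsMarkov ν μ S)
    (hfact : ∀ g : Lp ℝ 2 ν, Tφ (S g) = S (Tψ g))
    (hLeb : HasCountableLebesgueComponent (⇑Tψ)) :
    HasCountableLebesgueComponent (⇑Tφ) := by
  classical
  obtain ⟨e, he, hse⟩ := hLeb
  have hTφi : ∀ f g : Lp ℝ 2 μ, ⟪Tφ f, Tφ g⟫ = ⟪f, g⟫ := koopman_inner φ hφ Tφ hTφ
  have hTψi : ∀ f g : Lp ℝ 2 ν, ⟪Tψ f, Tψ g⟫ = ⟪f, g⟫ := koopman_inner ψ hψ Tψ hTψ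
  obtain ⟨C, hC⟩ := positive_linear_bounded S hMarkov.1
  set Scl : Lp ℝ 2 ν →L[ℝ] Lp ℝ 2 μ := S.mkContinuous C hC with hScl
  have hSclapp : ∀ x, Scl x = S x := fun x => rfl
  -- the subspace K0
  set M : Submodule ℝ (Lp ℝ 2 ν) := Submodule.span ℝ (Set.range e) with hM
  set K0 : Submodule ℝ (Lp ℝ 2 ν) := M.topologicalClosure with hK0
  haveI : CompleteSpace K0 := M.isClosed_topologicalClosure.completeSpace_coe
  have hmem : ∀ nk : ℕ × ℤ, e nk ∈ K0 := fun nk =>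
    Submodule.le_topologicalClosure M (Submodule.subset_span ⟨nk, rfl⟩)
  -- Tψ-invariance of K0
  have hMinv : ∀ x ∈ M, Tψ x ∈ M := by
    intro x hx
    induction hx using Submodule.span_induction with
    | mem y hy =>
      obtain ⟨⟨n, k⟩, rfl⟩ := hy
      rw [hse n k]
      exact Submodule.subset_span ⟨(n, k+1), rfl⟩
    | zero => simpa using Submodule.zero_mem M
    | add a b _ _ ha hb => rw [map_add]; exact Submodule.add_mem M ha hb
    | smul a x _ hx => rw [Tψ.map_smul]; exact Submodule.smul_mem M a hx
  have hTmem : ∀ x ∈ K0, Tψ x ∈ K0 := by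
    intro x hx
    have hclosed : IsClosed (⇑Tψ ⁻¹' (K0 : Set (Lp ℝ 2 ν))) :=
      (M.isClosed_topologicalClosure).preimage Tψ.continuous
    have hsub : (M : Set (Lp ℝ 2 ν)) ⊆ ⇑Tψ ⁻¹' (K0 : Set (Lp ℝ 2 ν)) := fun y hy =>
      Submodule.le_topologicalClosure M (hMinv y hy)
    have hcl := closure_minimal hsub hclosed
    have hx2 : x ∈ closure (M : Set (Lp ℝ 2 ν)) := by
      rw [← Submodule.topologicalClosure_coe]
      exact hx
    exact hcl hx2
  -- V
  set V : K0 →L[ℝ] K0 :=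
    ContinuousLinearMap.codRestrict (Tψ.comp K0.subtypeL) K0 (fun x => hTmem x x.2) with hV
  have hVapp : ∀ x : K0, (V x : Lp ℝ 2 ν) = Tψ (x : Lp ℝ 2 ν) := fun x => rfl
  have hVin : ∀ a b : K0, ⟪V a, V b⟫ = ⟪a, b⟫ := by
    intro a b
    rw [Submodule.coe_inner, Submodule.coe_inner, hVapp, hVapp]
    exact hTψi _ _
  -- eK
  set eK : ℕ × ℤ → K0 := fun nk => ⟨e nk, hmem nk⟩ with heK
  have heKon : Orthonormal ℝ eK := by
    rw [orthonormal_iff_ite] at he ⊢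
    intro i j
    rw [Submodule.coe_inner]
    exact he i j
  have hseK : ∀ (n : ℕ) (k : ℤ), V (eK (n, k)) = eK (n, k+1) := by
    intro n k
    apply Subtype.ext
    rw [hVapp]
    exact hse n k
  -- surjectivity of V
  have hVnorm : ∀ x : K0, ‖V x‖ = ‖x‖ := by
    intro x
    have h1 : ‖V x‖ ^ 2 = ‖x‖ ^ 2 := by
      rw [← real_inner_self_eq_norm_sq, ← real_inner_self_eq_norm_sq, hVin]
    have := congrArg Real.sqrt h1
    rwa [Real.sqrt_sq (norm_nonneg _), Real.sqrt_sq (norm_nonneg _)] at this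
  have hViso : Isometry ⇑V := AddMonoidHomClass.isometry_of_norm V hVnorm
  have hVsurj : Function.Surjective ⇑V := by
    intro y
    set Rng : Submodule ℝ K0 := LinearMap.range (V : K0 →ₗ[ℝ] K0) with hRng
    have hRngclosed : IsClosed (Rng : Set K0) := by
      have h1 : IsClosed (Set.range ⇑V) := hViso.isClosedEmbedding.isClosed_range
      have h2 : (Rng : Set K0) = Set.range ⇑V := by
        ext v
        simp [hRng, LinearMap.mem_range]
      rw [h2]
      exact h1
    have heKmem : ∀ nk : ℕ × ℤ, eK nk ∈ Rng := by
      rintro ⟨n, k⟩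
      refine ⟨eK (n, k-1), ?_⟩
      have := hseK n (k-1)
      rw [sub_add_cancel] at this
      exact this
    have hspan : Submodule.span ℝ (Set.range eK) ≤ Rng := by
      rw [Submodule.span_le]
      rintro v ⟨nk, rfl⟩
      exact heKmem nk
    have hdense : y ∈ closure ((Submodule.span ℝ (Set.range eK) : Submodule ℝ K0) : Set K0) := by
      rw [closure_subtype]
      have himg : ((↑) '' ((Submodule.span ℝ (Set.range eK) : Submodule ℝ K0) : Set K0))
          = ((M : Set (Lp ℝ 2 ν))) := by
        have h1 : (Submodule.map K0.subtype (Submodule.span ℝ (Set.range eK))) = M := by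
          rw [Submodule.map_span]
          congr 1
          ext v
          constructor
          · rintro ⟨u, ⟨nk, rfl⟩, rfl⟩
            exact ⟨nk, rfl⟩
          · rintro ⟨nk, rfl⟩
            exact ⟨eK nk, ⟨nk, rfl⟩, rfl⟩
        rw [← h1]
        rfl
      rw [himg]
      have := y.2
      rw [← Submodule.topologicalClosure_coe]
      exact this
    have hyRng : y ∈ Rng := by
      have h3 : closure ((Submodule.span ℝ (Set.range eK) : Submodule ℝ K0) : Set K0)
          ⊆ (Rng : Set K0) :=
        closure_minimal hspan hRngclosed
      exact h3 hdense
    exact hyRng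
  -- A
  set A : K0 →L[ℝ] Lp ℝ 2 μ := Scl.comp K0.subtypeL with hA
  have hAapp : ∀ x : K0, A x = S (x : Lp ℝ 2 ν) := fun x => rfl
  have hAinj : Function.Injective ⇑A := by
    intro a b hab
    rw [hAapp, hAapp] at hab
    exact Subtype.ext (hinj hab)
  have hAV : ∀ x : K0, A (V x) = Tφ (A x) := by
    intro x
    rw [hAapp, hAapp, hVapp, ← hfact]
  obtain ⟨e', he', hshift⟩ :=
    abstract_transfer Tφ hTφi V hVin hVsurj A hAinj hAV eK heKon hseK
  exact ⟨e', he', hshift⟩
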